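/- (Deterministic form of Lemma 3.5.) Let N ∈ ℕ, M = 2^{N+1}, and let Λ_N = {(−1,0)} ∪ {(n,k) : 0 ≤ n ≤ N, 0 ≤ k < 2^n}. Define the linear map w : ℝ^{Λ_N} → ℝ^M by w_ℓ(z) = Σ_{(n,k)∈Λ_N} z_{n,k} · Δ^N_ℓ Ψ_{n,k} for ℓ = 0, …, M−1, where Ψ_{−1,0} := Ψ_{−1}. Let F : ℝ^M → ℝ be twice differentiable and set G = F ∘ w. If z ∈ ℝ^{Λ_N} and c ≥ 0 are such that all second-order partial derivatives satisfy |∂²F/∂w_ℓ ∂w_j (w(z))| ≤ c for all ℓ, j, then for every 0 ≤ n ≤ N and 0 ≤ k < 2^n the mixed second partial derivative with respect to the coordinate z_{−1,0} and z_{n,k} satisfies |∂²G/∂z_{−1,0} ∂z_{n,k}(z)| ≤ c · 2^{−n/2 + 1}. -/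

import Mathlib

open MeasureTheory
open Set

/-- The Haar mother wavelet. -/
noncomputable def haarMother (t : ℝ) : ℝ :=
  if 0 ≤ t ∧ t < 1/2 then 1 else if 1/2 ≤ t ∧ t < 1 then -1 else 0

/-- The Haar function ψ_{n,k}. -/
noncomputable def haarFn (n k : ℕ) (t : ℝ) : ℝ :=
  (2:ℝ) ^ ((n : ℝ)/2) * haarMother ((2:ℝ)^n * t - k)

/-- The antiderivative Ψ_{n,k}(t) = ∫_0^t ψ_{n,k}(s) ds. -/
noncomputable def haarAnti (n k : ℕ) (t : ℝ) : ℝ := ∫ s in (0:ℝ)..t, haarFn n k s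

/-- The function ψ_{-1} = 1_{[0,1]}. -/
noncomputable def haarNeg (t : ℝ) : ℝ := Set.indicator (Set.Icc (0:ℝ) 1) (fun _ => 1) t

/-- The antiderivative Ψ_{-1}(t) = ∫_0^t ψ_{-1}(s) ds. -/
noncomputable def haarNegAnti (t : ℝ) : ℝ := ∫ s in (0:ℝ)..t, haarNeg s

/-- The dyadic grid point t^N_ℓ = ℓ / 2^{N+1}. -/
noncomputable def gridPt (N ℓ : ℕ) : ℝ := (ℓ : ℝ) / 2 ^ (N+1)

/-- The index set Λ_N = {(-1,0)} ∪ {(n,k) : 0 ≤ n ≤ N, 0 ≤ k < 2^n}; `none` encodes the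
index (-1,0). -/
abbrev HaarIdx (N : ℕ) := Option ((n : Fin (N+1)) × Fin (2^(n:ℕ)))

/-- The increment Δ^N_ℓ Ψ_i over the grid cell `[t^N_ℓ, t^N_{ℓ+1}]` for an index `i ∈ Λ_N`. -/
noncomputable def deltaPsi (N : ℕ) (i : HaarIdx N) (ℓ : Fin (2^(N+1))) : ℝ :=
  match i with
  | none => haarNegAnti (gridPt N ((ℓ : ℕ)+1)) - haarNegAnti (gridPt N (ℓ : ℕ))
  | some ⟨n, k⟩ => haarAnti n k (gridPt N ((ℓ : ℕ)+1)) - haarAnti n k (gridPt N (ℓ : ℕ))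

/-- The linear map sending Haar coefficients to the vector of Brownian-path increments:
`w_ℓ(z) = Σ_{(n,k) ∈ Λ_N} z_{n,k} Δ^N_ℓ Ψ_{n,k}`. -/
noncomputable def wMap (N : ℕ) (z : HaarIdx N → ℝ) : Fin (2^(N+1)) → ℝ :=
  fun ℓ => ∑ i : HaarIdx N, z i * deltaPsi N i ℓ




lemma measurable_haarMother : Measurable haarMother := by
  unfold haarMother
  exact Measurable.ite (measurableSet_Ico (a := (0:ℝ)) (b := 1/2)) measurable_const
    (Measurable.ite (measurableSet_Ico (a := (1/2:ℝ)) (b := 1)) measurable_const measurable_const)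

lemma abs_haarMother (t : ℝ) : |haarMother t| = (Set.Ico (0:ℝ) 1).indicator (fun _ => 1) t := by
  unfold haarMother
  rw [Set.indicator_apply]
  simp only [Set.mem_Ico]
  rcases lt_or_ge t 0 with h0 | h0
  · rw [if_neg (by intro h; linarith [h.1]), if_neg (by intro h; linarith [h.1]),
      if_neg (by intro h; linarith [h.1])]
    norm_num
  rcases lt_or_ge t (1/2) with hh | hh
  · rw [if_pos ⟨h0, hh⟩, if_pos ⟨h0, by linarith⟩]; norm_num
  rcases lt_or_ge t 1 with h1 | h1
  · rw [if_neg (by intro h; linarith [h.2]), if_pos ⟨hh, h1⟩, if_pos ⟨h0, h1⟩]; norm_num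
  · rw [if_neg (by intro h; linarith [h.2]), if_neg (by intro h; linarith [h.2]),
      if_neg (by intro h; linarith [h.2])]
    norm_num

lemma haar_mem_iff (n k : ℕ) (t : ℝ) :
    (2:ℝ)^n * t - k ∈ Set.Ico (0:ℝ) 1 ↔ t ∈ Set.Ico ((k:ℝ)/2^n) (((k:ℝ)+1)/2^n) := by
  have hp : (0:ℝ) < 2^n := by positivity
  simp only [Set.mem_Ico, sub_nonneg, sub_lt_iff_lt_add, div_le_iff₀ hp, lt_div_iff₀ hp]
  constructor
  · rintro ⟨h1, h2⟩; exact ⟨by linarith [mul_comm ((2:ℝ)^n) t], by linarith [mul_comm ((2:ℝ)^n) t]⟩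
  · rintro ⟨h1, h2⟩; exact ⟨by linarith [mul_comm ((2:ℝ)^n) t], by linarith [mul_comm ((2:ℝ)^n) t]⟩

lemma abs_haarFn (n k : ℕ) (t : ℝ) :
    |haarFn n k t| =
      (Set.Ico ((k:ℝ)/2^n) (((k:ℝ)+1)/2^n)).indicator (fun _ => (2:ℝ)^((n:ℝ)/2)) t := by
  unfold haarFn
  rw [abs_mul, abs_of_pos (by positivity : (0:ℝ) < (2:ℝ)^((n:ℝ)/2)), abs_haarMother,
    Set.indicator_apply, Set.indicator_apply, if_congr (haar_mem_iff n k t) rfl rfl]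
  split_ifs <;> simp

lemma measurable_haarFn (n k : ℕ) : Measurable (haarFn n k) := by
  unfold haarFn
  exact (measurable_haarMother.comp ((measurable_id.const_mul _).sub measurable_const)).const_mul _

lemma intervalIntegrable_haarFn (n k : ℕ) (a b : ℝ) :
    IntervalIntegrable (haarFn n k) volume a b := by
  apply IntervalIntegrable.mono_fun' (g := fun _ => (2:ℝ)^((n:ℝ)/2))
    intervalIntegrable_const (measurable_haarFn n k).aestronglyMeasurable
  filter_upwards with t
  rw [Real.norm_eq_abs, abs_haarFn, Set.indicator_apply]
  split_ifs <;> [exact le_refl _; positivity]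

lemma integral_abs_haarFn (n k : ℕ) (hk : k + 1 ≤ 2^n) :
    ∫ t in (0:ℝ)..1, |haarFn n k t| = (2:ℝ)^(-(n:ℝ)/2) := by
  set a := (k:ℝ)/2^n with ha
  set b := ((k:ℝ)+1)/2^n with hb
  have hp : (0:ℝ) < 2^n := by positivity
  have ha0 : 0 ≤ a := by positivity
  have hab : a < b := by rw [ha, hb, div_lt_div_iff₀ hp hp]; nlinarith
  have hb1 : b ≤ 1 := by
    rw [hb, div_le_one hp]
    have : ((k:ℝ)+1) = ((k+1 : ℕ) : ℝ) := by push_cast; ring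
    rw [this]
    exact_mod_cast hk
  simp_rw [abs_haarFn]
  rw [intervalIntegral.integral_of_le zero_le_one,
      MeasureTheory.setIntegral_indicator measurableSet_Ico]
  have hvol : volume (Set.Ioc (0:ℝ) 1 ∩ Set.Ico a b) = ENNReal.ofReal (b - a) := by
    rcases eq_or_lt_of_le ha0 with h|h
    · have hs : Set.Ioc (0:ℝ) 1 ∩ Set.Ico a b = Set.Ioo 0 b := by
        ext x
        simp only [Set.mem_inter_iff, Set.mem_Ioc, Set.mem_Ioo, Set.mem_Ico, ← h]
        constructor
        · rintro ⟨⟨h1, h2⟩, h3, h4⟩; exact ⟨h1, h4⟩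
        · rintro ⟨h1, h2⟩
          exact ⟨⟨h1, by linarith⟩, le_of_lt h1, h2⟩
      rw [hs, Real.volume_Ioo, ← h, sub_zero]
    · rw [Set.inter_eq_right.2
        (fun x hx => Set.mem_Ioc.2 ⟨lt_of_lt_of_le h (Set.mem_Ico.1 hx).1,
          le_trans (le_of_lt (Set.mem_Ico.1 hx).2) hb1⟩), Real.volume_Ico]
  rw [MeasureTheory.setIntegral_const, MeasureTheory.measureReal_def, hvol,
    ENNReal.toReal_ofReal (by linarith : (0:ℝ) ≤ b - a)]
  have hba : b - a = ((2:ℝ)^n)⁻¹ := by rw [ha, hb]; field_simp; ring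
  rw [hba, smul_eq_mul,
    show ((2:ℝ)^n)⁻¹ = (2:ℝ)^(-(n:ℝ)) from by
      rw [← Real.rpow_natCast 2 n, ← Real.rpow_neg (by norm_num)],
    ← Real.rpow_add (by norm_num)]
  congr 1
  ring

lemma integrable_haarNeg : MeasureTheory.Integrable haarNeg := by
  unfold haarNeg
  rw [MeasureTheory.integrable_indicator_iff measurableSet_Icc]
  exact MeasureTheory.integrableOn_const measure_Icc_lt_top.ne

lemma abs_haarNeg_le (t : ℝ) : ‖haarNeg t‖ ≤ 1 := by
  unfold haarNeg
  rw [Set.indicator_apply]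
  split_ifs <;> norm_num

lemma gridPt_succ (N ℓ : ℕ) : gridPt N (ℓ+1) - gridPt N ℓ = ((2:ℝ)^(N+1))⁻¹ := by
  unfold gridPt
  push_cast
  field_simp
  ring

lemma gridPt_mono (N ℓ : ℕ) : gridPt N ℓ ≤ gridPt N (ℓ+1) := by
  unfold gridPt
  gcongr
  push_cast
  linarith

lemma deltaPsi_none_eq (N : ℕ) (ℓ : Fin (2^(N+1))) :
    deltaPsi N none ℓ = ∫ t in gridPt N (ℓ:ℕ)..gridPt N ((ℓ:ℕ)+1), haarNeg t := by
  show haarNegAnti _ - haarNegAnti _ = _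
  exact intervalIntegral.integral_interval_sub_left
    (integrable_haarNeg.intervalIntegrable) (integrable_haarNeg.intervalIntegrable)

lemma sum_abs_deltaPsi_none (N : ℕ) : ∑ ℓ : Fin (2^(N+1)), |deltaPsi N none ℓ| ≤ 1 := by
  have hle : ∀ ℓ : Fin (2^(N+1)), |deltaPsi N none ℓ| ≤ ((2:ℝ)^(N+1))⁻¹ := by
    intro ℓ
    rw [deltaPsi_none_eq]
    calc |∫ t in gridPt N (ℓ:ℕ)..gridPt N ((ℓ:ℕ)+1), haarNeg t|
        ≤ 1 * |gridPt N ((ℓ:ℕ)+1) - gridPt N (ℓ:ℕ)| :=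
          intervalIntegral.norm_integral_le_of_norm_le_const (fun x _ => abs_haarNeg_le x)
      _ = ((2:ℝ)^(N+1))⁻¹ := by
          rw [one_mul, gridPt_succ, abs_of_nonneg (by positivity)]
  calc ∑ ℓ : Fin (2^(N+1)), |deltaPsi N none ℓ|
      ≤ ∑ _ℓ : Fin (2^(N+1)), ((2:ℝ)^(N+1))⁻¹ := Finset.sum_le_sum (fun ℓ _ => hle ℓ)
    _ = (2^(N+1) : ℕ) • ((2:ℝ)^(N+1))⁻¹ := by
        rw [Finset.sum_const, Finset.card_univ, Fintype.card_fin]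
    _ = 1 := by
        rw [nsmul_eq_mul]
        push_cast
        field_simp

lemma deltaPsi_some_int (N : ℕ) (n : Fin (N+1)) (k : Fin (2^(n:ℕ))) (ℓ : Fin (2^(N+1))) :
    deltaPsi N (some ⟨n, k⟩) ℓ
      = ∫ t in gridPt N (ℓ:ℕ)..gridPt N ((ℓ:ℕ)+1), haarFn (n:ℕ) (k:ℕ) t := by
  show haarAnti _ _ _ - haarAnti _ _ _ = _
  exact intervalIntegral.integral_interval_sub_left
    (intervalIntegrable_haarFn _ _ _ _) (intervalIntegrable_haarFn _ _ _ _)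

lemma sum_abs_deltaPsi_some (N : ℕ) (n : Fin (N+1)) (k : Fin (2^(n:ℕ))) :
    ∑ ℓ : Fin (2^(N+1)), |deltaPsi N (some ⟨n, k⟩) ℓ| ≤ (2:ℝ)^(-((n:ℕ):ℝ)/2) := by
  have key : ∀ ℓ : Fin (2^(N+1)), |deltaPsi N (some ⟨n, k⟩) ℓ|
      ≤ ∫ t in gridPt N (ℓ:ℕ)..gridPt N ((ℓ:ℕ)+1), |haarFn (n:ℕ) (k:ℕ) t| := by
    intro ℓ
    rw [deltaPsi_some_int]
    exact intervalIntegral.abs_integral_le_integral_abs (gridPt_mono N ℓ)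
  calc ∑ ℓ : Fin (2^(N+1)), |deltaPsi N (some ⟨n, k⟩) ℓ|
      ≤ ∑ ℓ : Fin (2^(N+1)), ∫ t in gridPt N (ℓ:ℕ)..gridPt N ((ℓ:ℕ)+1), |haarFn n k t| :=
        Finset.sum_le_sum (fun ℓ _ => key ℓ)
    _ = ∑ m ∈ Finset.range (2^(N+1)), ∫ t in gridPt N m..gridPt N (m+1), |haarFn n k t| :=
        Fin.sum_univ_eq_sum_range (fun m => ∫ t in gridPt N m..gridPt N (m+1), |haarFn n k t|) _
    _ = ∫ t in (gridPt N 0)..(gridPt N (2^(N+1))), |haarFn n k t| :=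
        intervalIntegral.sum_integral_adjacent_intervals
          (fun m _ => (intervalIntegrable_haarFn _ _ _ _).abs)
    _ = ∫ t in (0:ℝ)..1, |haarFn n k t| := by
        have h0 : gridPt N 0 = 0 := by simp [gridPt]
        have h1 : gridPt N (2^(N+1)) = 1 := by
          unfold gridPt
          push_cast
          field_simp
        rw [h0, h1]
    _ = (2:ℝ)^(-((n:ℕ):ℝ)/2) :=
        integral_abs_haarFn (n:ℕ) (k:ℕ) (Nat.succ_le_of_lt k.isLt)

noncomputable def Wclm (N : ℕ) : (HaarIdx N → ℝ) →L[ℝ] (Fin (2^(N+1)) → ℝ) :=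
  ContinuousLinearMap.pi fun ℓ => ∑ i : HaarIdx N, (deltaPsi N i ℓ) • ContinuousLinearMap.proj i

lemma wMap_eq (N : ℕ) : wMap N = ⇑(Wclm N) := by
  funext z
  funext ℓ
  simp [wMap, Wclm, ContinuousLinearMap.pi_apply, ContinuousLinearMap.sum_apply,
    ContinuousLinearMap.smul_apply, ContinuousLinearMap.proj_apply, mul_comm]

lemma Wclm_single (N : ℕ) (i0 : HaarIdx N) (ℓ : Fin (2^(N+1))) :
    Wclm N (Pi.single i0 1) ℓ = deltaPsi N i0 ℓ := by
  simp [Wclm, ContinuousLinearMap.pi_apply, ContinuousLinearMap.sum_apply,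
    ContinuousLinearMap.smul_apply, ContinuousLinearMap.proj_apply, Pi.single_apply]
  cases i0 with
  | none => simp
  | some s => simp

lemma pi_eq_sum_single {m : ℕ} (x : Fin m → ℝ) : x = ∑ i, x i • (Pi.single i (1:ℝ) : Fin m → ℝ) := by
  funext j
  simp [Pi.single_apply]

lemma bilin_apply_eq_sum {m : ℕ} (B : (Fin m → ℝ) →L[ℝ] (Fin m → ℝ) →L[ℝ] ℝ)
    (v u : Fin m → ℝ) :
    B v u = ∑ ℓ, ∑ j, (v ℓ * u j) • B (Pi.single ℓ 1) (Pi.single j 1) := by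
  calc B v u = ∑ x, (B (∑ i, v i • (Pi.single i 1 : Fin m → ℝ))) (u x • (Pi.single x 1 : Fin m → ℝ)) := by
        conv_lhs => rw [pi_eq_sum_single v, pi_eq_sum_single u]
        rw [map_sum]
    _ = ∑ x, ∑ i, (v i * u x) • B (Pi.single i 1) (Pi.single x 1) := by
        refine Finset.sum_congr rfl fun x _ => ?_
        simp only [_root_.map_smul, _root_.map_sum, ContinuousLinearMap.sum_apply,
          ContinuousLinearMap.smul_apply, Finset.smul_sum, smul_smul]
        exact Finset.sum_congr rfl fun i _ => by rw [mul_comm]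
    _ = ∑ ℓ, ∑ j, (v ℓ * u j) • B (Pi.single ℓ 1) (Pi.single j 1) := Finset.sum_comm

lemma bilin_bound {m : ℕ} (B : (Fin m → ℝ) →L[ℝ] (Fin m → ℝ) →L[ℝ] ℝ) (c : ℝ)
    (hB : ∀ ℓ j : Fin m, |B (Pi.single ℓ 1) (Pi.single j 1)| ≤ c) (v u : Fin m → ℝ) :
    |B v u| ≤ c * (∑ ℓ, |v ℓ|) * (∑ j, |u j|) := by
  rw [bilin_apply_eq_sum]
  calc |∑ ℓ, ∑ j, (v ℓ * u j) • B (Pi.single ℓ 1) (Pi.single j 1)|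
      ≤ ∑ ℓ, |∑ j, (v ℓ * u j) • B (Pi.single ℓ 1) (Pi.single j 1)| :=
        Finset.abs_sum_le_sum_abs _ _
    _ ≤ ∑ ℓ, ∑ j, |(v ℓ * u j) • B (Pi.single ℓ 1) (Pi.single j 1)| :=
        Finset.sum_le_sum fun ℓ _ => Finset.abs_sum_le_sum_abs _ _
    _ ≤ ∑ ℓ, ∑ j, |v ℓ| * |u j| * c := by
        refine Finset.sum_le_sum fun ℓ _ => Finset.sum_le_sum fun j _ => ?_
        rw [smul_eq_mul, abs_mul, abs_mul]
        exact mul_le_mul_of_nonneg_left (hB ℓ j) (by positivity)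
    _ = c * (∑ ℓ, |v ℓ|) * (∑ j, |u j|) := by
        rw [mul_assoc, Fintype.sum_mul_sum, Finset.mul_sum]
        exact Finset.sum_congr rfl fun ℓ _ => by
          rw [Finset.mul_sum]
          exact Finset.sum_congr rfl fun j _ => by ring


/-- deterministic form of Lemma 3.5: if all second-order partial derivatives
of `F` at `w(z)` are bounded by `c`, then the mixed second partial derivative of
`G = F ∘ w` with respect to the coordinates `z_{-1,0}` and `z_{n,k}` is bounded by
`c · 2^{-n/2 + 1}`. -/
theorem abs_fderiv2_comp_wMap_le (N : ℕ) (F : (Fin (2^(N+1)) → ℝ) → ℝ)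
    (hF : ContDiff ℝ 2 F) (z : HaarIdx N → ℝ) (c : ℝ) (hc : 0 ≤ c)
    (hbound : ∀ ℓ j : Fin (2^(N+1)),
      |fderiv ℝ (fun x => fderiv ℝ F x (Pi.single ℓ 1)) (wMap N z) (Pi.single j 1)| ≤ c)
    (n : Fin (N+1)) (k : Fin (2^(n:ℕ))) :
    |fderiv ℝ
        (fun z' => fderiv ℝ (fun z'' => F (wMap N z'')) z' (Pi.single (none : HaarIdx N) 1))
        z (Pi.single (some ⟨n, k⟩ : HaarIdx N) 1)| ≤
      c * (2:ℝ) ^ (-((n:ℕ) : ℝ)/2 + 1) := by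
  rw [wMap_eq N] at hbound ⊢
  have hFd : Differentiable ℝ F := hF.differentiable (by norm_num)
  have hF1 : ContDiff ℝ 1 (fderiv ℝ F) := hF.fderiv_right (by norm_num)
  have hD1 : Differentiable ℝ (fderiv ℝ F) := hF1.differentiable (by norm_num)
  set W := Wclm N with hW
  set u : Fin (2^(N+1)) → ℝ := W (Pi.single (none : HaarIdx N) 1) with hu
  set D2 := fderiv ℝ (fderiv ℝ F) (W z) with hD2
  have hb : ∀ ℓ j : Fin (2^(N+1)), |D2 (Pi.single j 1) (Pi.single ℓ 1)| ≤ c := by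
    intro ℓ j
    have h := hbound ℓ j
    rw [fderiv_clm_apply (hD1 _) (differentiableAt_const _)] at h
    simpa using h
  have hinner : (fun z' => fderiv ℝ (fun z'' => F (W z'')) z' (Pi.single (none : HaarIdx N) 1))
      = fun z' => fderiv ℝ F (W z') u := by
    funext z'
    have hcomp : (fun z'' => F (W z'')) = F ∘ ⇑W := rfl
    rw [hcomp, fderiv_comp z' (hFd _) W.differentiableAt, W.fderiv]
    rfl
  rw [hinner]
  have houter : (fun z' => fderiv ℝ F (W z') u) = (fun x => fderiv ℝ F x u) ∘ ⇑W := rfl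
  rw [houter, fderiv_comp z ((hD1 _).clm_apply (differentiableAt_const u)) W.differentiableAt,
    W.fderiv, fderiv_clm_apply (hD1 _) (differentiableAt_const u)]
  simp only [fderiv_const, fderiv_const_apply, Pi.zero_apply, ContinuousLinearMap.comp_zero, zero_add,
    ContinuousLinearMap.coe_comp', Function.comp_apply, ContinuousLinearMap.flip_apply]
  set v : Fin (2^(N+1)) → ℝ := W (Pi.single (some ⟨n, k⟩ : HaarIdx N) 1) with hvdef
  have hmain := bilin_bound D2 c (fun ℓ j => hb j ℓ) v u
  refine le_trans hmain ?_
  have hsv : ∑ ℓ, |v ℓ| ≤ (2:ℝ)^(-((n:ℕ):ℝ)/2) := by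
    have : ∀ ℓ, v ℓ = deltaPsi N (some ⟨n, k⟩) ℓ := fun ℓ => Wclm_single N _ ℓ
    simp_rw [this]
    exact sum_abs_deltaPsi_some N n k
  have hsu : ∑ j, |u j| ≤ 1 := by
    have : ∀ j, u j = deltaPsi N none j := fun j => Wclm_single N _ j
    simp_rw [this]
    exact sum_abs_deltaPsi_none N
  have hsv0 : 0 ≤ ∑ ℓ, |v ℓ| := Finset.sum_nonneg fun _ _ => abs_nonneg _
  have hsu0 : 0 ≤ ∑ j, |u j| := Finset.sum_nonneg fun _ _ => abs_nonneg _
  have hp : (0:ℝ) < (2:ℝ)^(-((n:ℕ):ℝ)/2) := by positivity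
  have h2 : c * (2:ℝ)^(-((n:ℕ):ℝ)/2 + 1) = c * ((2:ℝ)^(-((n:ℕ):ℝ)/2) * 2) := by
    rw [Real.rpow_add (by norm_num), Real.rpow_one]
  rw [h2]
  calc c * (∑ ℓ, |v ℓ|) * (∑ j, |u j|)
      ≤ c * ((2:ℝ)^(-((n:ℕ):ℝ)/2)) * 1 := by
        apply mul_le_mul _ hsu hsu0 (by positivity)
        exact mul_le_mul_of_nonneg_left hsv hc
    _ ≤ c * ((2:ℝ)^(-((n:ℕ):ℝ)/2) * 2) := by nlinarith
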